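/- With the setup below, define the rescaled trace τ on operators T of H by τ(T) := Σ_{α ∈ I, n̄_α ≥ 1} (1/n̄_α) Tr_H(P̃^α T), where P̃^α := (1/d_α) Σ_{i,j,k,ℓ} |α i k⟩_r⟨α i ℓ| ⊗ |ᾱ j k⟩_r̄⟨ᾱ j ℓ|. Then: (i) for every α ∈ I with n_α ≥ 1 and n̄_α ≥ 1 and every 1 ≤ i ≤ n_α, τ(P̃^{αi}_r) = 1, where P̃^{αi}_r := ((Σ_k |α i k⟩_r⟨α i k|) ⊗ 1) Π; and (ii) for every α ∈ I with n̄_α ≥ 1 and every O ∈ End(H_r) supported on the α-block (i.e., O = P̂^α_r O P̂^α_r with P̂^α_r := Σ_{i,k} |α i k⟩_r⟨α i k|), one has τ((O ⊗ 1) Π) = (1/d_α) Tr_{H_r}(O). (This is the relation between the rescaled trace on the gauge-invariant algebra, normalized so minimal projections have trace one, and the ordinary trace on the pre-gauged algebra.) -/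

import Mathlib

open Matrix
open scoped Kronecker ComplexOrder

abbrev BIdx (I : Type) (n d : I → ℕ) : Type := Σ α : I, Fin (n α) × Fin (d α)

noncomputable def Arep {G I : Type} [Group G] [Fintype I] [DecidableEq I] {d : I → ℕ}
    (n : I → ℕ) (D : ∀ α : I, G →* Matrix.unitaryGroup (Fin (d α)) ℂ) (g : G) :
    Matrix (BIdx I n d) (BIdx I n d) ℂ :=
  Matrix.blockDiagonal' fun α =>
    (1 : Matrix (Fin (n α)) (Fin (n α)) ℂ) ⊗ₖ ((D α g : Matrix (Fin (d α)) (Fin (d α)) ℂ))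

noncomputable def Abar {G I : Type} [Group G] [Fintype I] [DecidableEq I] {d : I → ℕ}
    (nbar : I → ℕ) (D : ∀ α : I, G →* Matrix.unitaryGroup (Fin (d α)) ℂ) (g : G) :
    Matrix (BIdx I nbar d) (BIdx I nbar d) ℂ :=
  Matrix.blockDiagonal' fun α =>
    (1 : Matrix (Fin (nbar α)) (Fin (nbar α)) ℂ) ⊗ₖ
      ((D α g : Matrix (Fin (d α)) (Fin (d α)) ℂ).map (starRingEnd ℂ))

noncomputable def gaugeProj {G I : Type} [Group G] [Fintype G] [Fintype I] [DecidableEq I]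
    {d : I → ℕ} (n nbar : I → ℕ) (D : ∀ α : I, G →* Matrix.unitaryGroup (Fin (d α)) ℂ) :
    Matrix (BIdx I n d × BIdx I nbar d) (BIdx I n d × BIdx I nbar d) ℂ :=
  (Fintype.card G : ℂ)⁻¹ • ∑ g : G, (Arep n D g) ⊗ₖ (Abar nbar D g)

noncomputable def Ptilde {I : Type} [DecidableEq I] (n nbar d : I → ℕ) (α : I) :
    Matrix (BIdx I n d × BIdx I nbar d) (BIdx I n d × BIdx I nbar d) ℂ :=
  (d α : ℂ)⁻¹ • ∑ i : Fin (n α), ∑ j : Fin (nbar α), ∑ k : Fin (d α), ∑ l : Fin (d α),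
    Matrix.single (⟨α, (i, k)⟩, ⟨α, (j, k)⟩) (⟨α, (i, l)⟩, ⟨α, (j, l)⟩) 1

noncomputable def AtildeR {G I : Type} [Group G] [Fintype G] [Fintype I] [DecidableEq I]
    {d : I → ℕ} (n nbar : I → ℕ) (D : ∀ α : I, G →* Matrix.unitaryGroup (Fin (d α)) ℂ) :
    Set (Matrix (BIdx I n d × BIdx I nbar d) (BIdx I n d × BIdx I nbar d) ℂ) :=
  { T | ∃ O : Matrix (BIdx I n d) (BIdx I n d) ℂ,
      T = gaugeProj n nbar D * (O ⊗ₖ (1 : Matrix (BIdx I nbar d) (BIdx I nbar d) ℂ)) *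
        gaugeProj n nbar D }

noncomputable def AtildeRbar {G I : Type} [Group G] [Fintype G] [Fintype I] [DecidableEq I]
    {d : I → ℕ} (n nbar : I → ℕ) (D : ∀ α : I, G →* Matrix.unitaryGroup (Fin (d α)) ℂ) :
    Set (Matrix (BIdx I n d × BIdx I nbar d) (BIdx I n d × BIdx I nbar d) ℂ) :=
  { T | ∃ O : Matrix (BIdx I nbar d) (BIdx I nbar d) ℂ,
      T = gaugeProj n nbar D * ((1 : Matrix (BIdx I n d) (BIdx I n d) ℂ) ⊗ₖ O) *
        gaugeProj n nbar D }

noncomputable def tauTr {I : Type} [Fintype I] [DecidableEq I] (n nbar d : I → ℕ)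
    (T : Matrix (BIdx I n d × BIdx I nbar d) (BIdx I n d × BIdx I nbar d) ℂ) : ℂ :=
  ∑ α ∈ Finset.univ.filter (fun α => 1 ≤ nbar α),
    ((nbar α : ℂ))⁻¹ * (Ptilde n nbar d α * T).trace


section Schur
variable {G : Type} [Group G] [Fintype G] {dd : ℕ}

/-- Schur's lemma: a matrix commuting with an irreducible family is scalar. -/
lemma schur_scalar (hdd : 1 ≤ dd)
    (D : G →* Matrix.unitaryGroup (Fin dd) ℂ)
    (hirr : ∀ (W : Submodule ℂ (Fin dd → ℂ)),
      (∀ g : G, ∀ x ∈ W, (D g : Matrix (Fin dd) (Fin dd) ℂ) *ᵥ x ∈ W) →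
      W = ⊥ ∨ W = ⊤)
    (M : Matrix (Fin dd) (Fin dd) ℂ)
    (hM : ∀ g : G, (D g : Matrix (Fin dd) (Fin dd) ℂ) * M = M * D g) :
    M = ((dd : ℂ)⁻¹ * M.trace) • 1 := by
  haveI : Nonempty (Fin dd) := ⟨⟨0, hdd⟩⟩
  haveI : Nontrivial (Fin dd → ℂ) := Function.nontrivial
  obtain ⟨c, hc⟩ := Module.End.exists_eigenvalue (Matrix.mulVecLin M)
  obtain ⟨x, hx⟩ := hc.exists_hasEigenvector
  have hx0 : x ≠ 0 := hx.right
  have hxe : M *ᵥ x = c • x := by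
    simpa [Matrix.mulVecLin_apply] using hx.apply_eq_smul
  set W : Submodule ℂ (Fin dd → ℂ) := LinearMap.ker (Matrix.mulVecLin (M - c • 1)) with hW
  have hcomm : ∀ g : G, (M - c • (1 : Matrix (Fin dd) (Fin dd) ℂ)) * D g
      = (D g : Matrix (Fin dd) (Fin dd) ℂ) * (M - c • 1) := by
    intro g
    rw [sub_mul, mul_sub, ← hM, Matrix.smul_mul, Matrix.mul_smul, one_mul, mul_one]
  have hinv : ∀ g : G, ∀ y ∈ W, (D g : Matrix (Fin dd) (Fin dd) ℂ) *ᵥ y ∈ W := by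
    intro g y hy
    simp only [hW, LinearMap.mem_ker, Matrix.mulVecLin_apply] at hy ⊢
    rw [Matrix.mulVec_mulVec, hcomm, ← Matrix.mulVec_mulVec, hy, Matrix.mulVec_zero]
  have hWne : W ≠ ⊥ := by
    rw [Submodule.ne_bot_iff]
    refine ⟨x, ?_, hx0⟩
    simp only [hW, LinearMap.mem_ker, Matrix.mulVecLin_apply, Matrix.sub_mulVec, hxe]
    simp [Matrix.smul_mulVec]
  have hWtop : W = ⊤ := (hirr W hinv).resolve_left hWne
  have hzero : M - c • 1 = 0 := by
    ext i j
    have hmem : (Pi.single j 1 : Fin dd → ℂ) ∈ W := hWtop ▸ Submodule.mem_top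
    have h0 : (M - c • 1) *ᵥ Pi.single j 1 = 0 := by
      exact LinearMap.mem_ker.mp hmem
    simpa [Matrix.mulVec_single] using congrFun h0 i
  have hMc : M = c • 1 := sub_eq_zero.mp hzero
  have hdne : (dd : ℂ) ≠ 0 := Nat.cast_ne_zero.mpr (by omega)
  rw [hMc]
  have htr : ((dd : ℂ))⁻¹ * ((c • (1 : Matrix (Fin dd) (Fin dd) ℂ)).trace) = c := by
    simp only [Matrix.trace_smul, Matrix.trace_one, smul_eq_mul, Fintype.card_fin]
    field_simp
  rw [htr]


lemma mul_std_mul {m : Type*} [Fintype m] [DecidableEq m] (A B : Matrix m m ℂ) (k a b : m) :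
    (A * Matrix.single k k (1:ℂ) * B) a b = A a k * B k b := by
  rw [Matrix.mul_assoc, Matrix.mul_apply]
  rw [Finset.sum_eq_single k]
  · simp
  · intro c _ hc
    rw [Matrix.single_mul_apply_of_ne (h := hc), mul_zero]
  · simp

lemma schur_orth (hdd : 1 ≤ dd)
    (D : G →* Matrix.unitaryGroup (Fin dd) ℂ)
    (hirr : ∀ (W : Submodule ℂ (Fin dd → ℂ)),
      (∀ g : G, ∀ x ∈ W, (D g : Matrix (Fin dd) (Fin dd) ℂ) *ᵥ x ∈ W) →
      W = ⊥ ∨ W = ⊤) (k k' l : Fin dd) :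
    ∑ g : G, (D g : Matrix (Fin dd) (Fin dd) ℂ) k' k
        * starRingEnd ℂ ((D g : Matrix (Fin dd) (Fin dd) ℂ) l k)
      = (Fintype.card G : ℂ) * (dd : ℂ)⁻¹ * (if k' = l then 1 else 0) := by
  set F : Matrix (Fin dd) (Fin dd) ℂ :=
    ∑ g : G, (D g : Matrix (Fin dd) (Fin dd) ℂ) * Matrix.single k k (1:ℂ)
      * star (D g : Matrix (Fin dd) (Fin dd) ℂ) with hF
  have hcomm : ∀ h : G, (D h : Matrix (Fin dd) (Fin dd) ℂ) * F = F * D h := by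
    intro h
    rw [hF, Finset.mul_sum, Finset.sum_mul]
    refine Fintype.sum_equiv (Equiv.mulLeft h) _ _ ?_
    intro g
    have h1 : star (D h : Matrix (Fin dd) (Fin dd) ℂ) * (D h : Matrix (Fin dd) (Fin dd) ℂ)
        = 1 := Matrix.UnitaryGroup.star_mul_self (D h)
    show (D h : Matrix (Fin dd) (Fin dd) ℂ) * _ = _
    simp only [Equiv.coe_mulLeft, _root_.map_mul, Submonoid.coe_mul, StarMul.star_mul,
      Matrix.mul_assoc]
    rw [h1, Matrix.mul_one]
  have htr : F.trace = (Fintype.card G : ℂ) := by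
    rw [hF, Matrix.trace_sum]
    have h2 : ∀ g : G, ((D g : Matrix (Fin dd) (Fin dd) ℂ) * Matrix.single k k (1:ℂ)
        * star (D g : Matrix (Fin dd) (Fin dd) ℂ)).trace = 1 := by
      intro g
      rw [Matrix.trace_mul_cycle, Matrix.UnitaryGroup.star_mul_self (D g),
        Matrix.one_mul, Matrix.trace_single_eq_same]
    simp [h2, Finset.card_univ]
  have hFs := schur_scalar hdd D hirr F (fun g => hcomm g)
  have hent := congrFun (congrFun hFs k') l
  rw [htr] at hent
  have hls : ∀ g : G, ((D g : Matrix (Fin dd) (Fin dd) ℂ) * Matrix.single k k (1:ℂ)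
      * star (D g : Matrix (Fin dd) (Fin dd) ℂ)) k' l
      = (D g : Matrix (Fin dd) (Fin dd) ℂ) k' k
        * starRingEnd ℂ ((D g : Matrix (Fin dd) (Fin dd) ℂ) l k) := by
    intro g
    rw [mul_std_mul, Matrix.star_apply, starRingEnd_apply]
  calc ∑ g : G, (D g : Matrix (Fin dd) (Fin dd) ℂ) k' k
        * starRingEnd ℂ ((D g : Matrix (Fin dd) (Fin dd) ℂ) l k)
      = F k' l := by rw [hF, Matrix.sum_apply]; exact (Finset.sum_congr rfl fun g _ => (hls g).symm)
    _ = (Fintype.card G : ℂ) * (dd : ℂ)⁻¹ * (if k' = l then 1 else 0) := by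
        rw [hent]
        simp only [Matrix.smul_apply, Matrix.one_apply, smul_eq_mul]
        split_ifs <;> ring

end Schur

lemma trace_stdBasis_mul {m : Type*} [Fintype m] [DecidableEq m] (p q : m) (M : Matrix m m ℂ) :
    (Matrix.single p q (1:ℂ) * M).trace = M q p := by
  rw [Matrix.trace, Finset.sum_eq_single p]
  · simp [Matrix.diag]
  · intro c _ hc
    simp [Matrix.diag, Matrix.single_mul_apply_of_ne (h := hc)]
  · simp

section Main
variable {G I : Type} [Group G] [Fintype G] [Fintype I] [DecidableEq I] {d : I → ℕ}
variable (n nbar : I → ℕ) (D : ∀ α : I, G →* Matrix.unitaryGroup (Fin (d α)) ℂ)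

lemma Abar_apply_eq (g : G) (β : I) (j j' : Fin (nbar β)) (l k : Fin (d β)) :
    Abar nbar D g ⟨β, (j, l)⟩ ⟨β, (j', k)⟩
      = (if j = j' then 1 else 0)
        * starRingEnd ℂ ((D β g : Matrix (Fin (d β)) (Fin (d β)) ℂ) l k) := by
  simp [Abar, Matrix.blockDiagonal'_apply_eq, Matrix.kroneckerMap_apply, Matrix.one_apply,
    Matrix.map_apply]

lemma Arep_mul_apply (O : Matrix (BIdx I n d) (BIdx I n d) ℂ) (g : G) (β : I)
    (i : Fin (n β)) (l k : Fin (d β)) :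
    (O * Arep n D g) ⟨β, (i, l)⟩ ⟨β, (i, k)⟩
      = ∑ k' : Fin (d β), O ⟨β, (i, l)⟩ ⟨β, (i, k')⟩
          * (D β g : Matrix (Fin (d β)) (Fin (d β)) ℂ) k' k := by
  rw [Matrix.mul_apply, ← Finset.univ_sigma_univ, Finset.sum_sigma, Finset.sum_eq_single β]
  · rw [← Finset.univ_product_univ, Finset.sum_product, Finset.sum_eq_single i]
    · refine Finset.sum_congr rfl fun k' _ => ?_
      congr 1
      simp [Arep, Matrix.blockDiagonal'_apply_eq, Matrix.kroneckerMap_apply,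
        Matrix.one_apply_eq]
    · intro i' _ hi'
      refine Finset.sum_eq_zero fun k' _ => ?_
      simp [Arep, Matrix.blockDiagonal'_apply_eq, Matrix.kroneckerMap_apply,
        Matrix.one_apply_ne hi']
    · simp
  · intro α' _ hα'
    refine Finset.sum_eq_zero fun x _ => ?_
    rw [Arep, Matrix.blockDiagonal'_apply_ne _ _ _ hα', mul_zero]
  · simp

lemma gsum_orth (hd : ∀ α, 1 ≤ d α)
    (hirr : ∀ α (W : Submodule ℂ (Fin (d α) → ℂ)),
      (∀ g : G, ∀ x ∈ W, (D α g : Matrix (Fin (d α)) (Fin (d α)) ℂ) *ᵥ x ∈ W) →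
      W = ⊥ ∨ W = ⊤)
    (O : Matrix (BIdx I n d) (BIdx I n d) ℂ) (β : I)
    (i : Fin (n β)) (l k : Fin (d β)) :
    ∑ g : G, (O * Arep n D g) ⟨β, (i, l)⟩ ⟨β, (i, k)⟩
        * starRingEnd ℂ ((D β g : Matrix (Fin (d β)) (Fin (d β)) ℂ) l k)
      = (Fintype.card G : ℂ) * (d β : ℂ)⁻¹ * O ⟨β, (i, l)⟩ ⟨β, (i, l)⟩ := by
  simp only [Arep_mul_apply, Finset.sum_mul]
  rw [Finset.sum_comm]
  have hkk : ∀ k' : Fin (d β),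
      ∑ g : G, O ⟨β, (i, l)⟩ ⟨β, (i, k')⟩ * (D β g : Matrix (Fin (d β)) (Fin (d β)) ℂ) k' k
          * starRingEnd ℂ ((D β g : Matrix (Fin (d β)) (Fin (d β)) ℂ) l k)
        = O ⟨β, (i, l)⟩ ⟨β, (i, k')⟩
          * ((Fintype.card G : ℂ) * (d β : ℂ)⁻¹ * (if k' = l then 1 else 0)) := by
    intro k'
    simp only [mul_assoc, ← Finset.mul_sum]
    rw [schur_orth (hd β) (D β) (hirr β) k k' l]
    ring
  rw [Finset.sum_congr rfl fun k' _ => hkk k']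
  simp only [mul_ite, mul_one, mul_zero, Finset.sum_ite_eq' Finset.univ l]
  simp only [Finset.mem_univ, if_true]
  ring

lemma Ptilde_mul_trace (hd : ∀ α, 1 ≤ d α)
    (hirr : ∀ α (W : Submodule ℂ (Fin (d α) → ℂ)),
      (∀ g : G, ∀ x ∈ W, (D α g : Matrix (Fin (d α)) (Fin (d α)) ℂ) *ᵥ x ∈ W) →
      W = ⊥ ∨ W = ⊤)
    (O : Matrix (BIdx I n d) (BIdx I n d) ℂ) (β : I) :
    (Ptilde n nbar d β
        * ((O ⊗ₖ (1 : Matrix (BIdx I nbar d) (BIdx I nbar d) ℂ)) * gaugeProj n nbar D)).trace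
      = (nbar β : ℂ) * (d β : ℂ)⁻¹
          * ∑ i : Fin (n β), ∑ l : Fin (d β), O ⟨β, (i, l)⟩ ⟨β, (i, l)⟩ := by
  have hcard : (Fintype.card G : ℂ) ≠ 0 := Nat.cast_ne_zero.mpr Fintype.card_ne_zero
  have hdb : (d β : ℂ) ≠ 0 := Nat.cast_ne_zero.mpr (by have := hd β; omega)
  have hT : ∀ (i : Fin (n β)) (j : Fin (nbar β)) (k l : Fin (d β)),
      ((O ⊗ₖ (1 : Matrix (BIdx I nbar d) (BIdx I nbar d) ℂ)) * gaugeProj n nbar D)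
          (⟨β, (i, l)⟩, ⟨β, (j, l)⟩) (⟨β, (i, k)⟩, ⟨β, (j, k)⟩)
        = (d β : ℂ)⁻¹ * O ⟨β, (i, l)⟩ ⟨β, (i, l)⟩ := by
    intro i j k l
    rw [gaugeProj, Matrix.mul_smul, Matrix.smul_apply, Matrix.mul_sum, Matrix.sum_apply]
    have hterm : ∀ g : G,
        ((O ⊗ₖ (1 : Matrix (BIdx I nbar d) (BIdx I nbar d) ℂ)) * (Arep n D g ⊗ₖ Abar nbar D g))
            (⟨β, (i, l)⟩, ⟨β, (j, l)⟩) (⟨β, (i, k)⟩, ⟨β, (j, k)⟩)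
          = (O * Arep n D g) ⟨β, (i, l)⟩ ⟨β, (i, k)⟩
            * starRingEnd ℂ ((D β g : Matrix (Fin (d β)) (Fin (d β)) ℂ) l k) := by
      intro g
      rw [← Matrix.mul_kronecker_mul, Matrix.one_mul, Matrix.kroneckerMap_apply]
      rw [Abar_apply_eq]
      simp
    rw [Finset.sum_congr rfl fun g _ => hterm g]
    rw [gsum_orth (n := n) (D := D) hd hirr O β i l k, smul_eq_mul]
    field_simp
  rw [Ptilde, Matrix.smul_mul, Matrix.trace_smul]
  simp only [Matrix.sum_mul, Matrix.trace_sum, trace_stdBasis_mul, hT]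
  simp only [Finset.sum_const, Finset.card_univ, Fintype.card_fin, nsmul_eq_mul,
    smul_eq_mul, ← Finset.mul_sum]
  field_simp

lemma tauTr_core (hd : ∀ α, 1 ≤ d α)
    (hirr : ∀ α (W : Submodule ℂ (Fin (d α) → ℂ)),
      (∀ g : G, ∀ x ∈ W, (D α g : Matrix (Fin (d α)) (Fin (d α)) ℂ) *ᵥ x ∈ W) →
      W = ⊥ ∨ W = ⊤)
    (O : Matrix (BIdx I n d) (BIdx I n d) ℂ) :
    tauTr n nbar d ((O ⊗ₖ (1 : Matrix (BIdx I nbar d) (BIdx I nbar d) ℂ)) * gaugeProj n nbar D)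
      = ∑ β ∈ Finset.univ.filter (fun β => 1 ≤ nbar β),
          (d β : ℂ)⁻¹ * ∑ i : Fin (n β), ∑ l : Fin (d β), O ⟨β, (i, l)⟩ ⟨β, (i, l)⟩ := by
  unfold tauTr
  refine Finset.sum_congr rfl fun β hβ => ?_
  rw [Ptilde_mul_trace n nbar D hd hirr O β]
  have hnb : (nbar β : ℂ) ≠ 0 := by
    simp only [Finset.mem_filter] at hβ
    exact Nat.cast_ne_zero.mpr (by omega)
  field_simp

end Main

/-- properties of the rescaled trace
`τ(T) = Σ_{α : n̄_α ≥ 1} (1/n̄_α) Tr(P̃^α T)`: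
(i) minimal projections `P̃^{αi}_r = ((Σ_k|αik⟩⟨αik|) ⊗ 1) Π` have `τ = 1`;
(ii) for `O` supported on the α-block, `τ((O ⊗ 1)Π) = d_α⁻¹ Tr(O)`. -/
theorem stmt10 (G I : Type) [Group G] [Fintype G] [Fintype I] [DecidableEq I]
    (d : I → ℕ) (hd : ∀ α, 1 ≤ d α)
    (D : ∀ α : I, G →* Matrix.unitaryGroup (Fin (d α)) ℂ)
    (hirr : ∀ α (W : Submodule ℂ (Fin (d α) → ℂ)),
      (∀ g : G, ∀ x ∈ W, (D α g : Matrix (Fin (d α)) (Fin (d α)) ℂ) *ᵥ x ∈ W) →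
      W = ⊥ ∨ W = ⊤)
    (hnoniso : ∀ α β, α ≠ β → ∀ F : Matrix (Fin (d α)) (Fin (d β)) ℂ,
      (∀ g : G, (D α g : Matrix (Fin (d α)) (Fin (d α)) ℂ) * F
          = F * (D β g : Matrix (Fin (d β)) (Fin (d β)) ℂ)) → F = 0)
    (n nbar : I → ℕ) :
    -- (i) the rescaled trace of each minimal projection is one
    (∀ α : I, 1 ≤ n α → 1 ≤ nbar α → ∀ i : Fin (n α),
      tauTr n nbar d
        (((∑ k : Fin (d α),
            Matrix.single (⟨α, (i, k)⟩ : BIdx I n d) (⟨α, (i, k)⟩ : BIdx I n d) 1)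
          ⊗ₖ (1 : Matrix (BIdx I nbar d) (BIdx I nbar d) ℂ)) * gaugeProj n nbar D) = 1) ∧
    -- (ii) relation between the rescaled and the ordinary trace on the α-block
    (∀ α : I, 1 ≤ nbar α → ∀ O : Matrix (BIdx I n d) (BIdx I n d) ℂ,
      O = (∑ i : Fin (n α), ∑ k : Fin (d α),
            Matrix.single (⟨α, (i, k)⟩ : BIdx I n d) (⟨α, (i, k)⟩ : BIdx I n d) 1)
          * O *
          (∑ i : Fin (n α), ∑ k : Fin (d α),
            Matrix.single (⟨α, (i, k)⟩ : BIdx I n d) (⟨α, (i, k)⟩ : BIdx I n d) 1) →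
      tauTr n nbar d
          ((O ⊗ₖ (1 : Matrix (BIdx I nbar d) (BIdx I nbar d) ℂ)) * gaugeProj n nbar D)
        = (d α : ℂ)⁻¹ * O.trace) := by
  constructor
  · intro α hn hnb i
    rw [tauTr_core n nbar D hd hirr]
    rw [Finset.sum_eq_single_of_mem α (by simp [hnb])]
    · have hval : ∑ i' : Fin (n α), ∑ l : Fin (d α),
          (∑ k : Fin (d α),
            Matrix.single (⟨α, (i, k)⟩ : BIdx I n d) (⟨α, (i, k)⟩ : BIdx I n d) (1:ℂ))
            ⟨α, (i', l)⟩ ⟨α, (i', l)⟩ = (d α : ℂ) := by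
        simp only [Matrix.sum_apply, Matrix.single, Matrix.of_apply,
          Sigma.mk.inj_iff, heq_eq_eq, Prod.mk.injEq]
        rw [Finset.sum_eq_single i]
        · simp
        · intro i' _ hi'
          simp [Ne.symm hi']
        · simp
      rw [hval]
      have hdz : (d α : ℂ) ≠ 0 := Nat.cast_ne_zero.mpr (by have := hd α; omega)
      field_simp
    · intro β _ hβα
      have hz : ∀ (i' : Fin (n β)) (l : Fin (d β)),
          (∑ k : Fin (d α),
            Matrix.single (⟨α, (i, k)⟩ : BIdx I n d) (⟨α, (i, k)⟩ : BIdx I n d) (1:ℂ))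
            ⟨β, (i', l)⟩ ⟨β, (i', l)⟩ = 0 := by
        intro i' l
        simp [Matrix.sum_apply, Matrix.single, Matrix.of_apply,
          Sigma.mk.inj_iff, Ne.symm hβα]
      simp [hz]
  · intro α hnb O hO
    rw [tauTr_core n nbar D hd hirr]
    have hdiag : ∀ β, β ≠ α → ∀ x : Fin (n β) × Fin (d β), O ⟨β, x⟩ ⟨β, x⟩ = 0 := by
      intro β hβ x
      have hP : ∀ c : BIdx I n d,
          (∑ i : Fin (n α), ∑ k : Fin (d α),
            Matrix.single (⟨α, (i, k)⟩ : BIdx I n d) (⟨α, (i, k)⟩ : BIdx I n d) (1:ℂ))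
            c ⟨β, x⟩ = 0 := by
        intro c
        simp [Matrix.sum_apply, Matrix.single, Matrix.of_apply,
          Sigma.mk.inj_iff, Ne.symm hβ]
      have h : O ⟨β, x⟩ ⟨β, x⟩
          = ((∑ i : Fin (n α), ∑ k : Fin (d α),
              Matrix.single (⟨α, (i, k)⟩ : BIdx I n d) (⟨α, (i, k)⟩ : BIdx I n d) (1:ℂ))
            * O *
            (∑ i : Fin (n α), ∑ k : Fin (d α),
              Matrix.single (⟨α, (i, k)⟩ : BIdx I n d) (⟨α, (i, k)⟩ : BIdx I n d) (1:ℂ)))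
            ⟨β, x⟩ ⟨β, x⟩ := by conv_lhs => rw [hO]
      rw [h, Matrix.mul_apply]
      exact Finset.sum_eq_zero fun c _ => by rw [hP c, mul_zero]
    have htr : O.trace = ∑ i : Fin (n α), ∑ l : Fin (d α), O ⟨α, (i, l)⟩ ⟨α, (i, l)⟩ := by
      rw [Matrix.trace, ← Finset.univ_sigma_univ, Finset.sum_sigma, Finset.sum_eq_single α]
      · rw [← Finset.univ_product_univ, Finset.sum_product]
        exact Finset.sum_congr rfl fun i _ => Finset.sum_congr rfl fun l _ => rfl
      · intro β _ hβ
        exact Finset.sum_eq_zero fun x _ => hdiag β hβ x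
      · simp
    rw [Finset.sum_eq_single_of_mem α (by simp [hnb])]
    · rw [htr]
    · intro β _ hβα
      have hzero : ∑ i : Fin (n β), ∑ l : Fin (d β), O ⟨β, (i, l)⟩ ⟨β, (i, l)⟩ = 0 :=
        Finset.sum_eq_zero fun i _ => Finset.sum_eq_zero fun l _ => hdiag β hβα (i, l)
      rw [hzero, mul_zero]
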